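/- There exists a positive constant μ > 0, depending only on the homogeneity exponent κ, the number of bodies N, and the masses, such that for every configuration x ∈ E^N and every T > 0 one has φ(x,x,T) ≤ μ T^{(1−κ)/(1+κ)}. -/

import Mathlib

open MeasureTheory Set
open scoped ENNReal

noncomputable section NBody

variable {E : Type*} [NormedAddCommGroup E] [InnerProductSpace ℝ E] [FiniteDimensional ℝ E]

/-- The homogeneous potential `U_κ` of degree `-2κ`, with value `∞` at collisions. -/
def pot {N : ℕ} (κ : ℝ) (m : Fin N → ℝ) (x : Fin N → E) : ℝ≥0∞ :=
  ∑ p ∈ Finset.univ.filter (fun p : Fin N × Fin N => p.1 < p.2),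
    ENNReal.ofReal (m p.1 * m p.2) * ENNReal.ofReal ‖x p.1 - x p.2‖ ^ (-(2 * κ))

/-- `γ` is absolutely continuous on `[a,b]`, with a.e. derivative `γ'`
(integrable and satisfying the fundamental theorem of calculus). -/
def ACPair {N : ℕ} (γ γ' : ℝ → Fin N → E) (a b : ℝ) : Prop :=
  IntervalIntegrable γ' volume a b ∧
    ∀ t ∈ Icc a b, γ t = γ a + ∫ s in a..t, γ' s

/-- Lagrangian action of an absolutely continuous curve on `[a,b]`:
kinetic part (w.r.t. the mass scalar product) plus potential part. -/
def action {N : ℕ} (κ : ℝ) (m : Fin N → ℝ) (γ γ' : ℝ → Fin N → E) (a b : ℝ) : ℝ≥0∞ :=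
  ∫⁻ t in Ioc a b,
    (ENNReal.ofReal ((1 / 2) * ∑ i, m i * ‖γ' t i‖ ^ 2) + pot κ m (γ t))

/-- `φ(x,y,T)`: minimal action among absolutely continuous curves binding `x` to `y`
in time `T`. -/
def phiT {N : ℕ} (κ : ℝ) (m : Fin N → ℝ) (x y : Fin N → E) (T : ℝ) : ℝ≥0∞ :=
  ⨅ (γ : ℝ → Fin N → E) (γ' : ℝ → Fin N → E)
    (_ : ACPair γ γ' 0 T ∧ γ 0 = x ∧ γ T = y), action κ m γ γ' 0 T

/-- The critical (Mañé) action potential `φ(x,y) = inf_{T>0} φ(x,y,T)`. -/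
def phi {N : ℕ} (κ : ℝ) (m : Fin N → ℝ) (x y : Fin N → E) : ℝ≥0∞ :=
  ⨅ (T : ℝ) (_ : 0 < T), phiT κ m x y T

/-- A function is dominated if `u(x) - u(y) ≤ φ(x,y)` for all `x, y`. -/
def Dominated {N : ℕ} (κ : ℝ) (m : Fin N → ℝ) (u : (Fin N → E) → ℝ) : Prop :=
  ∀ x y, ENNReal.ofReal (u x - u y) ≤ phi κ m x y

/-- The Lax–Oleinik semigroup `T_t⁻ u (x) = inf_y (u(y) + φ(x,y,t))`, with `T_0⁻ u = u`. -/
def lax {N : ℕ} (κ : ℝ) (m : Fin N → ℝ) (u : (Fin N → E) → ℝ) (t : ℝ)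
    (x : Fin N → E) : EReal :=
  if t = 0 then (u x : EReal)
  else ⨅ y : Fin N → E, ((u y : EReal) + ((phiT κ m x y t : ℝ≥0∞) : EReal))

/-- Squared dual norm (w.r.t. the mass scalar product) of a linear form on `E^N`:
`|p|² = ∑ᵢ mᵢ⁻¹ ‖pᵢ‖²`. -/
def dualNormSq {N : ℕ} (m : Fin N → ℝ) (p : (Fin N → E) →L[ℝ] ℝ) : ℝ :=
  ∑ i, (m i)⁻¹ * ‖p.comp (LinearMap.single ℝ (fun _ : Fin N => E) i).toContinuousLinearMap‖ ^ 2

end NBody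

set_option maxHeartbeats 1000000 in
/-- There is `μ > 0`, depending only on `κ`, `N` and the masses, such that
`φ(x,x,T) ≤ μ T^((1-κ)/(1+κ))` for every configuration `x` and every `T > 0`. -/
theorem phi_diag_bound
    {E : Type*} [NormedAddCommGroup E] [InnerProductSpace ℝ E] [FiniteDimensional ℝ E]
    [Nontrivial E]
    (κ : ℝ) (hκ : κ ∈ Ioo (0:ℝ) 1) (N : ℕ) (hN : 2 ≤ N)
    (m : Fin N → ℝ) (hm : ∀ i, 0 < m i) :
    ∃ μ > (0:ℝ), ∀ x : Fin N → E, ∀ T > (0:ℝ),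
      phiT κ m x x T ≤ ENNReal.ofReal (μ * T ^ ((1 - κ) / (1 + κ))) := by
  obtain ⟨hκ0, hκ1⟩ := hκ
  have h1κ : (0:ℝ) < 1 + κ := by linarith
  obtain ⟨e0, he0⟩ := exists_ne (0 : E)
  obtain ⟨e, he_def⟩ : ∃ e : E, e = ‖e0‖⁻¹ • e0 := ⟨_, rfl⟩
  have he : ‖e‖ = 1 := by
    rw [he_def, norm_smul, norm_inv, norm_norm,
      inv_mul_cancel₀ (norm_ne_zero_iff.mpr he0)]
  obtain ⟨α, hα_def⟩ : ∃ α : ℝ, α = 1 / (1 + κ) := ⟨_, rfl⟩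
  have hα0 : 0 < α := by rw [hα_def]; positivity
  have hα1 : α < 1 := by rw [hα_def, div_lt_one h1κ]; linarith
  have hαhalf : 1/2 < α := by rw [hα_def, lt_div_iff₀ h1κ]; linarith
  obtain ⟨β, hβ_def⟩ : ∃ β : ℝ, β = 2 * α - 2 := ⟨_, rfl⟩
  have hβ1 : -1 < β := by rw [hβ_def]; linarith
  have hβ0 : β < 0 := by rw [hβ_def]; linarith
  have hβ1' : 0 < β + 1 := by linarith
  have hβκ : β + 1 = (1 - κ) / (1 + κ) := by
    rw [hβ_def, hα_def]; field_simp; ring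
  have hαβ : α * (-(2 * κ)) = β := by
    rw [hβ_def, hα_def]; field_simp; ring
  have hαβ2 : (α - 1) * 2 = β := by rw [hβ_def]; ring
  have hNpos : (0:ℝ) < (N:ℝ) := by exact_mod_cast (by omega : 0 < N)
  obtain ⟨Mtot, hM_def⟩ : ∃ M : ℝ, M = ∑ i, m i := ⟨_, rfl⟩
  have hM : 0 < Mtot := by
    rw [hM_def]
    exact Finset.sum_pos (fun i _ => hm i) ⟨⟨0, by omega⟩, Finset.mem_univ _⟩
  obtain ⟨Cm, hC_def⟩ : ∃ C : ℝ,
      C = ∑ p ∈ Finset.univ.filter (fun p : Fin N × Fin N => p.1 < p.2),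
        m p.1 * m p.2 := ⟨_, rfl⟩
  have hC0 : 0 ≤ Cm := by
    rw [hC_def]
    exact Finset.sum_nonneg fun p _ => le_of_lt (mul_pos (hm _) (hm _))
  obtain ⟨A, hA_def⟩ : ∃ A : ℝ, A = (N : ℝ)^2 * Mtot * α^2 / 2 + Cm := ⟨_, rfl⟩
  have hA0 : 0 < A := by
    have h1 : (0:ℝ) < (N : ℝ)^2 * Mtot * α^2 / 2 :=
      div_pos (mul_pos (mul_pos (pow_pos hNpos 2) hM) (pow_pos hα0 2)) two_pos
    rw [hA_def]
    exact add_pos_of_pos_of_nonneg h1 hC0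
  refine ⟨2 * A / (β + 1), by positivity, ?_⟩
  intro x T hT
  obtain ⟨w, hw_def⟩ : ∃ w : Fin N → ℝ, w = fun i => (inner ℝ (x i) e : ℝ) := ⟨_, rfl⟩
  obtain ⟨σ, hσ_def⟩ : ∃ σ : Equiv.Perm (Fin N), σ = Tuple.sort w := ⟨_, rfl⟩
  have hσmono : Monotone (w ∘ σ) := by rw [hσ_def]; exact Tuple.monotone_sort w
  obtain ⟨lam, hlam_def⟩ : ∃ lam : Fin N → ℝ,
      lam = fun i => ((σ.symm i : ℕ) : ℝ) := ⟨_, rfl⟩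
  have hlam_nonneg : ∀ i, 0 ≤ lam i := by
    intro i; rw [hlam_def]; exact Nat.cast_nonneg _
  have hlam_le : ∀ i, lam i ≤ (N : ℝ) := by
    intro i
    rw [hlam_def]
    have h1 : ((σ.symm i : ℕ) : ℝ) < (N : ℝ) := by exact_mod_cast (σ.symm i).isLt
    exact h1.le
  obtain ⟨v, hv_def⟩ : ∃ v : Fin N → E, v = fun i => lam i • e := ⟨_, rfl⟩
  obtain ⟨h, hh_def⟩ : ∃ h : ℝ → ℝ, h = fun t =>
      if t ≤ T / 2 then α * t ^ (α - 1) else -(α * (T - t) ^ (α - 1)) := ⟨_, rfl⟩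
  obtain ⟨f, hf_def⟩ : ∃ f : ℝ → ℝ, f = fun t => ∫ s in (0:ℝ)..t, h s := ⟨_, rfl⟩
  obtain ⟨γ, hγ_def⟩ : ∃ γ : ℝ → Fin N → E, γ = fun t => x + f t • v := ⟨_, rfl⟩
  obtain ⟨γ', hγ'_def⟩ : ∃ γ' : ℝ → Fin N → E, γ' = fun t => h t • v := ⟨_, rfl⟩
  -- measurability of h
  have m1 : Measurable (fun s : ℝ => s ^ (α - 1)) := by
    apply measurable_of_continuousOn_compl_singleton (0:ℝ)
    intro s hs
    exact (Real.continuousAt_rpow_const s _ (Or.inl hs)).continuousWithinAt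
  have m2 : Measurable (fun s : ℝ => (T - s) ^ (α - 1)) :=
    m1.comp (measurable_const.sub measurable_id)
  have hmeas : Measurable h := by
    rw [hh_def]
    exact Measurable.ite (measurableSet_le measurable_id measurable_const)
      (m1.const_mul α) ((m2.const_mul α)).neg
  -- integrability of the majorant and of h
  have i1 : IntervalIntegrable (fun s : ℝ => s ^ (α - 1)) volume 0 T :=
    intervalIntegral.intervalIntegrable_rpow' (by linarith)
  have i2 : IntervalIntegrable (fun s : ℝ => (T - s) ^ (α - 1)) volume 0 T := by
    have h2 := (intervalIntegral.intervalIntegrable_rpow'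
      (a := 0) (b := T) (by linarith : (-1:ℝ) < α - 1)).comp_sub_left T
    rw [sub_zero, sub_self] at h2
    exact h2.symm
  have hg : IntervalIntegrable
      (fun s : ℝ => α * (s ^ (α - 1) + (T - s) ^ (α - 1))) volume 0 T :=
    (i1.add i2).const_mul α
  have hInt_h : IntervalIntegrable h volume 0 T := by
    apply hg.mono_fun hmeas.aestronglyMeasurable
    filter_upwards [self_mem_ae_restrict measurableSet_uIoc] with s hs
    rw [Set.uIoc_of_le hT.le] at hs
    have hs0 : 0 ≤ s := hs.1.le
    have hsT : s ≤ T := hs.2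
    have h1 : 0 ≤ s ^ (α - 1) := Real.rpow_nonneg hs0 _
    have h2 : 0 ≤ (T - s) ^ (α - 1) := Real.rpow_nonneg (by linarith) _
    have hr : ‖α * (s ^ (α - 1) + (T - s) ^ (α - 1))‖
        = α * (s ^ (α - 1) + (T - s) ^ (α - 1)) := by
      rw [Real.norm_eq_abs, abs_of_nonneg (mul_nonneg hα0.le (add_nonneg h1 h2))]
    rw [hr, hh_def]
    simp only
    split_ifs with hc
    · rw [Real.norm_eq_abs, abs_of_nonneg (mul_nonneg hα0.le h1)]
      nlinarith [mul_nonneg hα0.le h2]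
    · rw [Real.norm_eq_abs, abs_neg, abs_of_nonneg (mul_nonneg hα0.le h2)]
      nlinarith [mul_nonneg hα0.le h1]
  -- evaluation of f on the two halves
  have hfL : ∀ t, 0 ≤ t → t ≤ T / 2 → f t = t ^ α := by
    intro t ht0 htc
    simp only [hf_def]
    have hcg : Set.EqOn h (fun s : ℝ => α * s ^ (α - 1)) (Set.uIcc 0 t) := by
      intro s hs
      rw [Set.uIcc_of_le ht0] at hs
      simp only [hh_def, if_pos (le_trans hs.2 htc)]
    rw [intervalIntegral.integral_congr hcg, intervalIntegral.integral_const_mul,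
      integral_rpow (Or.inl (by linarith : (-1:ℝ) < α - 1))]
    rw [show α - 1 + 1 = α by ring, Real.zero_rpow hα0.ne']
    field_simp
    ring
  have hfhalf : f (T/2) = (T/2) ^ α := hfL (T/2) (by linarith) le_rfl
  have hfR : ∀ t, T / 2 ≤ t → t ≤ T → f t = (T - t) ^ α := by
    intro t ht1 ht2
    have hsub1 : IntervalIntegrable h volume 0 (T/2) :=
      hInt_h.mono_set' (by
        rw [Set.uIoc_of_le hT.le, Set.uIoc_of_le (by linarith : (0:ℝ) ≤ T/2)]
        exact Set.Ioc_subset_Ioc le_rfl (by linarith))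
    have hsub2 : IntervalIntegrable h volume (T/2) t :=
      hInt_h.mono_set' (by
        rw [Set.uIoc_of_le hT.le, Set.uIoc_of_le ht1]
        exact Set.Ioc_subset_Ioc (by linarith) ht2)
    have hsplit : f t = f (T/2) + ∫ s in (T/2)..t, h s := by
      simp only [hf_def]
      rw [← intervalIntegral.integral_add_adjacent_intervals hsub1 hsub2]
    have hcongr : (∫ s in (T/2)..t, h s)
        = ∫ s in (T/2)..t, -(α * (T - s) ^ (α - 1)) := by
      apply intervalIntegral.integral_congr_ae
      apply Filter.Eventually.of_forall
      intro s hs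
      rw [Set.uIoc_of_le ht1] at hs
      simp only [hh_def, if_neg (not_le.mpr hs.1)]
    have hval : (∫ s in (T/2)..t, -(α * (T - s) ^ (α - 1)))
        = (T - t) ^ α - (T/2) ^ α := by
      rw [intervalIntegral.integral_neg, intervalIntegral.integral_const_mul]
      rw [intervalIntegral.integral_comp_sub_left (fun u : ℝ => u ^ (α - 1)) T]
      rw [integral_rpow (Or.inl (by linarith : (-1:ℝ) < α - 1))]
      rw [show α - 1 + 1 = α by ring]
      rw [show T - T/2 = T/2 by ring]
      field_simp
      ring
    rw [hsplit, hcongr, hval, hfhalf]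
    ring
  have hf_nonneg : ∀ t ∈ Icc (0:ℝ) T, 0 ≤ f t := by
    rintro t ⟨ht0, ht1⟩
    by_cases hc : t ≤ T/2
    · rw [hfL t ht0 hc]; exact Real.rpow_nonneg ht0 _
    · rw [hfR t (le_of_not_ge hc) ht1]; exact Real.rpow_nonneg (by linarith) _
  have hf_pos : ∀ t ∈ Ioo (0:ℝ) T, 0 < f t := by
    rintro t ⟨ht0, ht1⟩
    by_cases hc : t ≤ T/2
    · rw [hfL t ht0.le hc]; exact Real.rpow_pos_of_pos ht0 _
    · rw [hfR t (le_of_not_ge hc) ht1.le]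
      exact Real.rpow_pos_of_pos (by linarith) _
  have hf0 : f 0 = 0 := by
    simp only [hf_def]; exact intervalIntegral.integral_same
  have hfT : f T = 0 := by
    rw [hfR T (by linarith) le_rfl, sub_self, Real.zero_rpow hα0.ne']
  have hγ0 : γ 0 = x := by
    simp only [hγ_def, hf0, zero_smul, add_zero]
  have hγT : γ T = x := by
    simp only [hγ_def, hfT, zero_smul, add_zero]
  -- the pair (γ, γ') is absolutely continuous
  have hACi : IntervalIntegrable γ' volume 0 T := by
    rw [hγ'_def]
    exact ⟨hInt_h.1.smul_const v, hInt_h.2.smul_const v⟩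
  have hFTC : ∀ t ∈ Icc (0:ℝ) T, γ t = γ 0 + ∫ s in (0:ℝ)..t, γ' s := by
    intro t _
    have hsm : (∫ s in (0:ℝ)..t, γ' s) = f t • v := by
      simp only [hγ'_def, hf_def]
      rw [intervalIntegral.integral_smul_const]
    rw [hγ0, hsm, hγ_def]
  have hAC : ACPair γ γ' 0 T := by
    unfold ACPair
    exact ⟨hACi, hFTC⟩
  have hle1 : phiT κ m x x T ≤ action κ m γ γ' 0 T := by
    unfold phiT
    exact iInf_le_of_le γ (iInf_le_of_le γ' (iInf_le _ ⟨hAC, hγ0, hγT⟩))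
  -- separation of bodies along the curve
  have hsep : ∀ t ∈ Icc (0:ℝ) T, ∀ p q : Fin N, p ≠ q →
      f t ≤ ‖γ t p - γ t q‖ := by
    intro t ht p q hpq
    have key : ∀ p q : Fin N, σ.symm p < σ.symm q → f t ≤ ‖γ t q - γ t p‖ := by
      intro p q hlt
      have hwle : w p ≤ w q := by
        have h1 := hσmono hlt.le
        simpa [Function.comp, Equiv.apply_symm_apply] using h1
      have hlamlt : lam p + 1 ≤ lam q := by
        simp only [hlam_def]
        have h2 : (σ.symm p : ℕ) < (σ.symm q : ℕ) := Fin.lt_def.mp hlt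
        exact_mod_cast h2
      have hdiff : γ t q - γ t p = (x q - x p) + (f t * (lam q - lam p)) • e := by
        simp only [hγ_def, hv_def, Pi.add_apply, Pi.smul_apply]
        rw [smul_smul, smul_smul, mul_sub, sub_smul]
        abel
      have hinner : (inner ℝ (γ t q - γ t p) e : ℝ)
          = (w q - w p) + f t * (lam q - lam p) := by
        rw [hdiff, inner_add_left, inner_sub_left, real_inner_smul_left,
          real_inner_self_eq_norm_sq, he]
        simp only [hw_def]
        ring
      have hfn : 0 ≤ f t := hf_nonneg t ht
      have hstep : f t ≤ (inner ℝ (γ t q - γ t p) e : ℝ) := by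
        rw [hinner]
        nlinarith [mul_nonneg hfn (by linarith : (0:ℝ) ≤ lam q - lam p - 1)]
      calc f t ≤ (inner ℝ (γ t q - γ t p) e : ℝ) := hstep
        _ ≤ ‖γ t q - γ t p‖ * ‖e‖ := real_inner_le_norm _ _
        _ = ‖γ t q - γ t p‖ := by rw [he, mul_one]
    have hne : σ.symm p ≠ σ.symm q := fun hc => hpq (σ.symm.injective hc)
    rcases hne.lt_or_gt with h' | h'
    · rw [norm_sub_rev]; exact key p q h'
    · exact key q p h'
  -- the comparison function G
  obtain ⟨G, hG_def⟩ : ∃ G : ℝ → ℝ,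
      G = fun t => A * (t ^ β + (T - t) ^ β) := ⟨_, rfl⟩
  have j1 : IntervalIntegrable (fun s : ℝ => s ^ β) volume 0 T :=
    intervalIntegral.intervalIntegrable_rpow' hβ1
  have j2 : IntervalIntegrable (fun s : ℝ => (T - s) ^ β) volume 0 T := by
    have h2 := (intervalIntegral.intervalIntegrable_rpow'
      (a := 0) (b := T) hβ1).comp_sub_left T
    rw [sub_zero, sub_self] at h2
    exact h2.symm
  have hGint : IntervalIntegrable G volume 0 T := by
    rw [hG_def]; exact (j1.add j2).const_mul A
  -- pointwise bound of the Lagrangian by G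
  have hbound : ∀ t ∈ Ioo (0:ℝ) T,
      ENNReal.ofReal ((1 / 2) * ∑ i, m i * ‖γ' t i‖ ^ 2) + pot κ m (γ t)
        ≤ ENNReal.ofReal (G t) := by
    intro t ht
    have ht0 : 0 < t := ht.1
    have htT : t < T := ht.2
    have hX0 : 0 ≤ t ^ β := Real.rpow_nonneg ht0.le _
    have hX1 : 0 ≤ (T - t) ^ β := Real.rpow_nonneg (by linarith) _
    have hXnn : 0 ≤ t ^ β + (T - t) ^ β := add_nonneg hX0 hX1
    have hcase : (f t = t ^ α ∧ h t = α * t ^ (α - 1)) ∨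
        (f t = (T - t) ^ α ∧ h t = -(α * (T - t) ^ (α - 1))) := by
      by_cases hc : t ≤ T / 2
      · exact Or.inl ⟨hfL t ht0.le hc, by simp only [hh_def, if_pos hc]⟩
      · exact Or.inr ⟨hfR t (le_of_not_ge hc) htT.le,
          by simp only [hh_def, if_neg hc]⟩
    have hfval : f t ^ (-(2 * κ)) ≤ t ^ β + (T - t) ^ β := by
      rcases hcase with ⟨hf', _⟩ | ⟨hf', _⟩
      · rw [hf', ← Real.rpow_mul ht0.le, hαβ]
        linarith
      · rw [hf', ← Real.rpow_mul (by linarith : (0:ℝ) ≤ T - t), hαβ]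
        linarith
    have hb : ∀ u : ℝ, 0 ≤ u → (α * u ^ (α - 1)) ^ 2 = α ^ 2 * u ^ β := by
      intro u hu
      rw [mul_pow, ← Real.rpow_natCast (u ^ (α - 1)) 2, ← Real.rpow_mul hu]
      push_cast
      rw [hαβ2]
    have hsq : h t ^ 2 ≤ α ^ 2 * (t ^ β + (T - t) ^ β) := by
      rcases hcase with ⟨_, hh'⟩ | ⟨_, hh'⟩
      · rw [hh', hb t ht0.le]
        nlinarith [mul_nonneg (sq_nonneg α) hX1]
      · rw [hh', Even.neg_pow even_two, hb (T - t) (by linarith)]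
        nlinarith [mul_nonneg (sq_nonneg α) hX0]
    have hkin : (1 / 2) * ∑ i, m i * ‖γ' t i‖ ^ 2
        ≤ (N : ℝ)^2 * Mtot * α^2 / 2 * (t ^ β + (T - t) ^ β) := by
      have hterm : ∀ i, m i * ‖γ' t i‖ ^ 2
          ≤ m i * ((N : ℝ)^2 * (α^2 * (t ^ β + (T - t) ^ β))) := by
        intro i
        have hni : ‖γ' t i‖ = |h t| * lam i := by
          simp only [hγ'_def, hv_def, Pi.smul_apply, norm_smul,
            Real.norm_eq_abs, he, mul_one, abs_of_nonneg (hlam_nonneg i)]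
        rw [hni, mul_pow, sq_abs]
        have hlam2 : lam i ^ 2 ≤ (N : ℝ)^2 := by
          nlinarith [hlam_le i, hlam_nonneg i]
        have hq := mul_le_mul hsq hlam2 (sq_nonneg _)
          (mul_nonneg (sq_nonneg α) hXnn)
        have hgoal : h t ^ 2 * lam i ^ 2
            ≤ (N : ℝ)^2 * (α^2 * (t ^ β + (T - t) ^ β)) := by
          calc h t ^ 2 * lam i ^ 2
              ≤ (α^2 * (t ^ β + (T - t) ^ β)) * ((N : ℝ)^2) := hq
            _ = (N : ℝ)^2 * (α^2 * (t ^ β + (T - t) ^ β)) := by ring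
        exact mul_le_mul_of_nonneg_left hgoal (hm i).le
      have hsum : ∑ i, m i * ‖γ' t i‖ ^ 2
          ≤ Mtot * ((N : ℝ)^2 * (α^2 * (t ^ β + (T - t) ^ β))) := by
        rw [hM_def, Finset.sum_mul]
        exact Finset.sum_le_sum fun i _ => hterm i
      calc (1 / 2) * ∑ i, m i * ‖γ' t i‖ ^ 2
          ≤ (1 / 2) * (Mtot * ((N : ℝ)^2 * (α^2 * (t ^ β + (T - t) ^ β)))) := by
            linarith
        _ = (N : ℝ)^2 * Mtot * α^2 / 2 * (t ^ β + (T - t) ^ β) := by ring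
    have hpot : pot κ m (γ t) ≤ ENNReal.ofReal (Cm * (t ^ β + (T - t) ^ β)) := by
      have hfpos : 0 < f t := hf_pos t ht
      have hstep1 : pot κ m (γ t)
          ≤ ∑ p ∈ Finset.univ.filter (fun p : Fin N × Fin N => p.1 < p.2),
            ENNReal.ofReal (m p.1 * m p.2) * ENNReal.ofReal (f t ^ (-(2 * κ))) := by
        unfold pot
        apply Finset.sum_le_sum
        intro p hp
        have hpq : p.1 ≠ p.2 := ne_of_lt (Finset.mem_filter.mp hp).2
        have hrs : f t ≤ ‖γ t p.1 - γ t p.2‖ :=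
          hsep t (Ioo_subset_Icc_self ht) p.1 p.2 hpq
        apply mul_le_mul_right
        rw [← ENNReal.ofReal_rpow_of_pos hfpos]
        rw [ENNReal.rpow_neg, ENNReal.rpow_neg]
        exact ENNReal.inv_le_inv.mpr
          (ENNReal.rpow_le_rpow (ENNReal.ofReal_le_ofReal hrs)
            (by linarith : (0:ℝ) ≤ 2 * κ))
      calc pot κ m (γ t) ≤ _ := hstep1
        _ = ENNReal.ofReal Cm * ENNReal.ofReal (f t ^ (-(2 * κ))) := by
            rw [hC_def, ENNReal.ofReal_sum_of_nonneg
              (fun p _ => (mul_pos (hm _) (hm _)).le), Finset.sum_mul]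
        _ = ENNReal.ofReal (Cm * (f t ^ (-(2 * κ)))) := (ENNReal.ofReal_mul hC0).symm
        _ ≤ ENNReal.ofReal (Cm * (t ^ β + (T - t) ^ β)) :=
            ENNReal.ofReal_le_ofReal (mul_le_mul_of_nonneg_left hfval hC0)
    calc ENNReal.ofReal ((1 / 2) * ∑ i, m i * ‖γ' t i‖ ^ 2) + pot κ m (γ t)
        ≤ ENNReal.ofReal ((N : ℝ)^2 * Mtot * α^2 / 2 * (t ^ β + (T - t) ^ β))
            + ENNReal.ofReal (Cm * (t ^ β + (T - t) ^ β)) :=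
          add_le_add (ENNReal.ofReal_le_ofReal hkin) hpot
      _ = ENNReal.ofReal (G t) := by
          rw [← ENNReal.ofReal_add
            (mul_nonneg (div_nonneg (mul_nonneg (mul_nonneg (sq_nonneg _) hM.le)
              (sq_nonneg _)) (by norm_num)) hXnn)
            (mul_nonneg hC0 hXnn)]
          simp only [hG_def]
          congr 1
          rw [hA_def]
          ring
  -- a.e. bound on the integration interval
  have hsing : (volume.restrict (Ioc (0:ℝ) T)) {T} = 0 := by
    rw [Measure.restrict_apply (measurableSet_singleton T)]
    exact measure_mono_null Set.inter_subset_left Real.volume_singleton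
  have hae : ∀ᵐ t ∂(volume.restrict (Ioc (0:ℝ) T)),
      ENNReal.ofReal ((1 / 2) * ∑ i, m i * ‖γ' t i‖ ^ 2) + pot κ m (γ t)
        ≤ ENNReal.ofReal (G t) := by
    filter_upwards [self_mem_ae_restrict measurableSet_Ioc,
      compl_mem_ae_iff.mpr hsing] with t htm htne
    exact hbound t ⟨htm.1, lt_of_le_of_ne htm.2 (by simpa using htne)⟩
  have hGnn : 0 ≤ᵐ[volume.restrict (Ioc (0:ℝ) T)] G := by
    filter_upwards [self_mem_ae_restrict measurableSet_Ioc] with t htm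
    rw [hG_def]
    exact mul_nonneg hA0.le (add_nonneg (Real.rpow_nonneg htm.1.le _)
      (Real.rpow_nonneg (by linarith [htm.2] : (0:ℝ) ≤ T - t) _))
  -- value of the integral of G
  have hIG : (∫ t in Ioc (0:ℝ) T, G t)
      = 2 * A / (β + 1) * T ^ ((1 - κ) / (1 + κ)) := by
    rw [← intervalIntegral.integral_of_le hT.le]
    have hGeq : (∫ t in (0:ℝ)..T, G t)
        = ∫ t in (0:ℝ)..T, A * (t ^ β + (T - t) ^ β) := by rw [hG_def]
    rw [hGeq, intervalIntegral.integral_const_mul,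
      intervalIntegral.integral_add j1 j2,
      integral_rpow (Or.inl hβ1)]
    have h2 : (∫ t in (0:ℝ)..T, (T - t) ^ β) = ∫ u in (0:ℝ)..T, u ^ β := by
      have h3 := intervalIntegral.integral_comp_sub_left
        (a := 0) (b := T) (fun u : ℝ => u ^ β) T
      rw [sub_zero, sub_self] at h3
      exact h3
    rw [h2, integral_rpow (Or.inl hβ1),
      Real.zero_rpow (ne_of_gt hβ1'), ← hβκ]
    field_simp
    ring
  -- conclusion
  refine le_trans hle1 ?_
  unfold action
  calc (∫⁻ t in Ioc (0:ℝ) T,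
        (ENNReal.ofReal ((1 / 2) * ∑ i, m i * ‖γ' t i‖ ^ 2) + pot κ m (γ t)))
      ≤ ∫⁻ t in Ioc (0:ℝ) T, ENNReal.ofReal (G t) := lintegral_mono_ae hae
    _ = ENNReal.ofReal (∫ t in Ioc (0:ℝ) T, G t) :=
        (MeasureTheory.ofReal_integral_eq_lintegral_ofReal hGint.1 hGnn).symm
    _ = ENNReal.ofReal (2 * A / (β + 1) * T ^ ((1 - κ) / (1 + κ))) := by rw [hIG]
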